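/- Let p > 2, q = p/(p-1), ε ∈ (0,1/2), δ = 2q(q-1)ε/85, p_ε = (p-2ε)/(1-ε), and let Q be the Nazarov–Treil Bellman function. Define the 4×4 matrices U_φ = O_φ ⊕ O_{-φ} (block diagonal with rotation matrices by angles φ and -φ) and R_φ(Q) = (1/2)(U_φᵀ H(Q) + H(Q) U_φ) where H(Q) is the Hessian of Q. Then for every φ with |φ| ≤ arccos(1 - 2/p_ε), every ξ = (ζ,η) with η ≠ 0 and |ζ|^p ≠ |η|^q, and every ω = (ω₁,ω₂) ∈ ℝ²×ℝ²: ⟨R_φ(Q)(ξ)ω, ω⟩ ≥ 2δ cos φ · |ω₁||ω₂|. -/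

import Mathlib

noncomputable section
open Real Matrix

def qexp (p : ℝ) : ℝ := p / (p - 1)

/-- The Nazarov–Treil Bellman function on `ℂ × ℂ ≅ ℝ² × ℝ²`. -/
def Q (p δ : ℝ) (ζ η : ℂ) : ℝ :=
  if ‖ζ‖ ^ p ≤ ‖η‖ ^ qexp p then
    ‖ζ‖ ^ p + ‖η‖ ^ qexp p +
      δ * (‖ζ‖ ^ (2 : ℝ) * ‖η‖ ^ (2 - qexp p))
  else
    ‖ζ‖ ^ p + ‖η‖ ^ qexp p +
      δ * ((2 / p) * ‖ζ‖ ^ p + (2 / qexp p - 1) * ‖η‖ ^ qexp p)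

/-- Coordinate directions in `ℂ ≅ ℝ²`. -/
def dir : Fin 2 → ℂ := ![1, Complex.I]

/-- Partial derivative of `Q` in the `i`-th coordinate of the `ζ` variable. -/
def dζ (p δ : ℝ) (i : Fin 2) (ζ η : ℂ) : ℝ :=
  deriv (fun t : ℝ => Q p δ (ζ + (t : ℂ) * dir i) η) 0

/-- Partial derivative of `Q` in the `i`-th coordinate of the `η` variable. -/
def dη (p δ : ℝ) (i : Fin 2) (ζ η : ℂ) : ℝ :=
  deriv (fun t : ℝ => Q p δ ζ (η + (t : ℂ) * dir i)) 0

/-- The `ζζ` block of the Hessian of `Q`: `(H₁)ᵢⱼ = ∂²_{ζᵢζⱼ} Q`. -/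
def H1 (p δ : ℝ) (ζ η : ℂ) : Matrix (Fin 2) (Fin 2) ℝ :=
  Matrix.of fun i j => deriv (fun s : ℝ => dζ p δ j (ζ + (s : ℂ) * dir i) η) 0

/-- The mixed `ζη` block of the Hessian of `Q`: `(H₂)ᵢⱼ = ∂²_{ζᵢηⱼ} Q`. -/
def H2 (p δ : ℝ) (ζ η : ℂ) : Matrix (Fin 2) (Fin 2) ℝ :=
  Matrix.of fun i j => deriv (fun s : ℝ => dη p δ j (ζ + (s : ℂ) * dir i) η) 0

/-- The `ηη` block of the Hessian of `Q`: `(H₃)ᵢⱼ = ∂²_{ηᵢηⱼ} Q`. -/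
def H3 (p δ : ℝ) (ζ η : ℂ) : Matrix (Fin 2) (Fin 2) ℝ :=
  Matrix.of fun i j => deriv (fun s : ℝ => dη p δ j ζ (η + (s : ℂ) * dir i)) 0

def I1 (p δ : ℝ) (ζ η : ℂ) : Matrix (Fin 2) (Fin 2) ℝ :=
  !![H1 p δ ζ η 0 1, (H1 p δ ζ η 1 1 - H1 p δ ζ η 0 0) / 2;
     (H1 p δ ζ η 1 1 - H1 p δ ζ η 0 0) / 2, -(H1 p δ ζ η 0 1)]

def I2 (p δ : ℝ) (ζ η : ℂ) : Matrix (Fin 2) (Fin 2) ℝ :=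
  (1 / 2 : ℝ) •
    !![H2 p δ ζ η 1 0 - H2 p δ ζ η 0 1, H2 p δ ζ η 0 0 + H2 p δ ζ η 1 1;
       -(H2 p δ ζ η 0 0) - H2 p δ ζ η 1 1, H2 p δ ζ η 1 0 - H2 p δ ζ η 0 1]

def I3 (p δ : ℝ) (ζ η : ℂ) : Matrix (Fin 2) (Fin 2) ℝ :=
  !![H3 p δ ζ η 0 1, (H3 p δ ζ η 1 1 - H3 p δ ζ η 0 0) / 2;
     (H3 p δ ζ η 1 1 - H3 p δ ζ η 0 0) / 2, -(H3 p δ ζ η 0 1)]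

def Omat (φ : ℝ) : Matrix (Fin 2) (Fin 2) ℝ :=
  !![Real.cos φ, -Real.sin φ; Real.sin φ, Real.cos φ]

/-- The full `4×4` Hessian of `Q`, in block form. -/
def HQ (p δ : ℝ) (ζ η : ℂ) : Matrix (Fin 2 ⊕ Fin 2) (Fin 2 ⊕ Fin 2) ℝ :=
  Matrix.fromBlocks (H1 p δ ζ η) (H2 p δ ζ η) (H2 p δ ζ η)ᵀ (H3 p δ ζ η)

def Umat (φ : ℝ) : Matrix (Fin 2 ⊕ Fin 2) (Fin 2 ⊕ Fin 2) ℝ :=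
  Matrix.fromBlocks (Omat φ) 0 0 (Omat (-φ))

/-- `R_φ(Q) = (U_φᵀ H(Q) + H(Q) U_φ)/2`. -/
def RQ (p δ φ : ℝ) (ζ η : ℂ) : Matrix (Fin 2 ⊕ Fin 2) (Fin 2 ⊕ Fin 2) ℝ :=
  (1 / 2 : ℝ) • ((Umat φ)ᵀ * HQ p δ ζ η + HQ p δ ζ η * Umat φ)

namespace NTscal
set_option maxHeartbeats 1000000
lemma key (c S X Y : ℝ) (hS : S^2 = 1 - c^2) : 0 ≤ (1-c)*X^2 + (1+c)*Y^2 - 2*S*X*Y := by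
  nlinarith [sq_nonneg ((1+c)*Y - S*X), sq_nonneg ((1-c)*X - S*Y), sq_nonneg (X-Y), sq_nonneg (X+Y)]

lemma amgm (α β γ N1 N2 : ℝ) (hα : 0 < α) (hαβ : γ^2 ≤ α*β)
    (hN1 : 0 ≤ N1) (hN2 : 0 ≤ N2) : 2*γ*N1*N2 ≤ α*N1^2 + β*N2^2 := by
  nlinarith [sq_nonneg (α*N1 - γ*N2), mul_nonneg hN1 hN2, sq_nonneg N2]

lemma neg_le_of_sq (G K : ℝ) (hK : 0 ≤ K) (h : G^2 ≤ K^2) : -K ≤ G := by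
  nlinarith [sq_nonneg (G+K)]

lemma cs_bound (c S A1 B1 A2 B2 M1 M2 : ℝ) (hS : S^2 = 1-c^2) (hc : 0 ≤ c)
    (hM1 : M1^2 = A1^2+B1^2) (hM2 : M2^2 = A2^2+B2^2) (hM1nn : 0 ≤ M1) (hM2nn : 0 ≤ M2) :
    -((1+c)*M1*M2) ≤ 2*c*A1*A2 + S*(A1*B2 - A2*B1) := by
  have hv : (2*c*A2+S*B2)^2 + (S*A2)^2 ≤ (1+c)^2 * M2^2 := by
    nlinarith [mul_nonneg hc (key c S A2 B2 hS)]
  have hcs : (2*c*A1*A2 + S*(A1*B2 - A2*B1))^2 ≤ M1^2 * ((2*c*A2+S*B2)^2 + (S*A2)^2) := by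
    nlinarith [sq_nonneg (A1*(-(S*A2)) - B1*(2*c*A2+S*B2))]
  have hK : (0:ℝ) ≤ (1+c)*M1*M2 := by positivity
  apply neg_le_of_sq _ _ hK
  calc (2*c*A1*A2 + S*(A1*B2 - A2*B1))^2 ≤ M1^2 * ((1+c)^2*M2^2) := by nlinarith [sq_nonneg M1]
    _ = ((1+c)*M1*M2)^2 := by ring


section
variable {p q δ ε c S : ℝ}

structure Basics (p q δ ε c S : ℝ) : Prop where
  hp : 2 < p
  hq : q = p/(p-1)
  hε0 : 0 < ε
  hε1 : ε < 1/2
  hδ : δ = 2*q*(q-1)*ε/85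
  hc : (p-2)/(p-2*ε) ≤ c
  hc1 : c ≤ 1
  hS : S^2 = 1 - c^2

namespace Basics
variable (h : Basics p q δ ε c S)
include h

lemma hp1 : 0 < p - 1 := by linarith [h.hp]
lemma hq1 : 1 < q := by
  have := h.hp1; rw [h.hq]; rw [lt_div_iff₀ this]; linarith [h.hp]
lemma hq2 : q < 2 := by
  have := h.hp1; rw [h.hq]; rw [div_lt_iff₀ this]; linarith [h.hp]
lemma hc0 : 0 < c := by
  have h1 : (0:ℝ) < p - 2 := by linarith [h.hp]
  have h2 : (0:ℝ) < p - 2*ε := by linarith [h.hp, h.hε1]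
  calc (0:ℝ) < (p-2)/(p-2*ε) := div_pos h1 h2
    _ ≤ c := h.hc
lemma hδ0 : 0 < δ := by
  have h1 := h.hq1; have h2 := h.hq2; have h3 := h.hε0
  rw [h.hδ]
  have : 0 < 2*q*(q-1)*ε := mul_pos (mul_pos (by linarith : (0:ℝ) < 2*q) (by linarith : (0:ℝ) < q-1)) h3
  linarith
lemma hpc : 2*ε*c ≤ p*c - (p-2) := by
  have h2 : (0:ℝ) < p - 2*ε := by linarith [h.hp, h.hε1]
  have := (div_le_iff₀ h2).mp h.hc
  nlinarith
lemma hqc : 2*ε*(q-1)*c ≤ q*c - (2-q) := by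
  have h1 := h.hp1
  have e1 : q - 1 = 1/(p-1) := by rw [h.hq]; field_simp; ring
  have h3 : (q*c - (2-q))*(p-1) = p*c - (p-2) := by rw [h.hq]; field_simp; ring
  have h4 : (2*ε*(q-1)*c)*(p-1) = 2*ε*c := by rw [e1]; field_simp
  have := h.hpc
  nlinarith [h.hc0]
lemma h2q : 2 - q ≤ q*c := by
  have h1 := h.hqc
  have h2 : 0 ≤ 2*ε*(q-1)*c :=
    le_of_lt (mul_pos (mul_pos (by linarith [h.hε0] : (0:ℝ) < 2*ε) (by linarith [h.hq1] : (0:ℝ) < q-1)) h.hc0)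
  linarith

end Basics

lemma regionA (h : Basics p q δ ε c S)
    (x y u v w1 w2 w3 w4 R2 R4 S2 SQ2 SQ4 SMQ SMQ2 r s N1 N2 NZ NH : ℝ)
    (hNZ : NZ = x^2+y^2) (hNH : NH = u^2+v^2)
    (hr : r^2 = NZ) (hrnn : 0 ≤ r)
    (hs : s^2 = NH) (hspos : 0 < s)
    (hR2 : 0 ≤ R2) (hR4 : R4*NZ = R2)
    (hS2 : 0 < S2) (hSQ2 : 0 < SQ2) (hSS : S2*SQ2 = 1)
    (hSQ4 : SQ4*NH = SQ2) (hSMQ : SMQ*NH = S2) (hSMQ2 : SMQ2*NH = SMQ)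
    (ht : SMQ*r*s ≤ 1)
    (hN1 : N1^2 = w1^2+w2^2) (hN2 : N2^2 = w3^2+w4^2) (hN1nn : 0 ≤ N1) (hN2nn : 0 ≤ N2) :
    2*δ*c*N1*N2 ≤
      (p*R2 + 2*δ*S2)*(c*(w1^2+w2^2))
      + p*(p-2)*R4*((x*w1+y*w2)*(c*(x*w1+y*w2) - S*(x*w2-y*w1)))
      + 2*δ*(2-q)*SMQ*(2*c*(x*w1+y*w2)*(u*w3+v*w4)
          + S*((x*w1+y*w2)*(u*w4-v*w3) - (u*w3+v*w4)*(x*w2-y*w1)))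
      + (q*SQ2 + δ*(2-q)*NZ*SMQ)*(c*(w3^2+w4^2))
      + (q*(q-2)*SQ4 - δ*q*(2-q)*NZ*SMQ2)*((u*w3+v*w4)*(c*(u*w3+v*w4) + S*(u*w4-v*w3))) := by
  subst hNZ
  subst hNH
  have hc0 := h.hc0
  have hδ0 := h.hδ0
  have hq1 := h.hq1
  have hq2 := h.hq2
  have hp := h.hp
  have hε0 := h.hε0
  have huv : 0 < u^2+v^2 := by rw [← hs]; positivity
  have hSMQpos : 0 < SMQ := by
    have e : SMQ = S2/(u^2+v^2) := ((eq_div_iff (ne_of_gt huv)).mpr hSMQ)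
    rw [e]; exact div_pos hS2 huv
  have htnn : 0 ≤ SMQ*r*s := by positivity
  set A1 := x*w1+y*w2 with hA1
  set B1 := x*w2-y*w1 with hB1
  set A2 := u*w3+v*w4 with hA2
  set B2 := u*w4-v*w3 with hB2
  set P := (p*R2)*(c*(w1^2+w2^2)) + p*(p-2)*R4*(A1*(c*A1 - S*B1)) with hPdef
  set T3 := (q*SQ2 + δ*(2-q)*(x^2+y^2)*SMQ)*(c*(w3^2+w4^2))
      + (q*(q-2)*SQ4 - δ*q*(2-q)*(x^2+y^2)*SMQ2)*(A2*(c*A2 + S*B2)) with hT3def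
  set Cross := 2*δ*(2-q)*SMQ*(2*c*A1*A2 + S*(A1*B2 - A2*B1)) with hCrossdef
  set α := 2*δ*c*S2 with hα
  set β := q*SQ2*((q*c-(2-q))/2) + δ*(2-q)*((x^2+y^2)*SMQ)*(((2-q)*c-q)/2) with hβ
  set γ := δ*c + δ*(2-q)*SMQ*r*s*(1+c) with hγ
  -- P ≥ 0
  have hLp : ε*c ≤ (p*c-(p-2))/2 := by linarith [h.hpc]
  have hLq : ε*(q-1)*c ≤ (q*c-(2-q))/2 := by linarith [h.hqc]
  have hP : 0 ≤ P := by
    rcases eq_or_lt_of_le (by positivity : (0:ℝ) ≤ x^2+y^2) with hxy | hxy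
    · have hR2z : R2 = 0 := by rw [← hR4, ← hxy, mul_zero]
      have hx2 : x^2 = 0 := by nlinarith only [hxy, sq_nonneg x, sq_nonneg y]
      have hy2 : y^2 = 0 := by nlinarith only [hxy, sq_nonneg x, sq_nonneg y]
      have hx : x = 0 := by exact pow_eq_zero_iff (by norm_num) |>.mp hx2
      have hy : y = 0 := by exact pow_eq_zero_iff (by norm_num) |>.mp hy2
      have : P = 0 := by rw [hPdef, hR2z, hA1, hB1, hx, hy]; ring
      linarith
    · have expand : (x^2+y^2) * P =
          (p*R2*((p-2)/2))*((1-c)*B1^2+(1+c)*A1^2-2*S*B1*A1)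
          + (p*R2*((p*c-(p-2))/2))*(A1^2+B1^2) := by
        rw [hPdef, hA1, hB1]
        linear_combination (p*(p-2)*((x*w1+y*w2)*(c*(x*w1+y*w2) - S*(x*w2-y*w1)))) * hR4
      have h1 : (0:ℝ) ≤ p*R2*((p-2)/2) := by
        have : (0:ℝ) ≤ (p-2)/2 := by linarith
        positivity
      have h2 : (0:ℝ) ≤ p*R2*((p*c-(p-2))/2) := by
        have : (0:ℝ) < (p*c-(p-2))/2 := lt_of_lt_of_le (by positivity) hLp
        positivity
      have hm : 0 ≤ (x^2+y^2) * P := by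
        rw [expand]
        have k1 := key c S B1 A1 h.hS
        have k2 : (0:ℝ) ≤ A1^2+B1^2 := by positivity
        have m1 := mul_nonneg h1 k1
        have m2 := mul_nonneg h2 k2
        linarith only [m1, m2]
      exact (mul_nonneg_iff_of_pos_left hxy).mp hm
  -- T3 eigen bound
  have hT3 : β*(w3^2+w4^2) ≤ T3 := by
    rw [← sub_nonneg]
    have expand : (u^2+v^2)*(T3 - β*(w3^2+w4^2)) =
        (q*SQ2*((2-q)/2) + δ*(2-q)*((x^2+y^2)*SMQ)*(q/2))*((1-c)*A2^2+(1+c)*B2^2-2*S*A2*B2) := by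
      rw [hT3def, hβ, hA2, hB2]
      linear_combination (q*(q-2)*((u*w3+v*w4)*(c*(u*w3+v*w4) + S*(u*w4-v*w3)))) * hSQ4
        + (-(δ*q*(2-q)*(x^2+y^2))*((u*w3+v*w4)*(c*(u*w3+v*w4) + S*(u*w4-v*w3)))) * hSMQ2
    have hcoef : (0:ℝ) ≤ q*SQ2*((2-q)/2) + δ*(2-q)*((x^2+y^2)*SMQ)*(q/2) := by
      have e1 : (0:ℝ) ≤ (2-q)/2 := by linarith
      have e2 : (0:ℝ) ≤ q*SQ2 := by positivity
      have e3 : (0:ℝ) ≤ δ*(2-q)*((x^2+y^2)*SMQ)*(q/2) := by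
        have : (0:ℝ) ≤ 2-q := by linarith
        positivity
      linarith only [mul_nonneg e2 e1, e3]
    have hm : 0 ≤ (u^2+v^2)*(T3 - β*(w3^2+w4^2)) := by
      rw [expand]; exact mul_nonneg hcoef (key c S A2 B2 h.hS)
    exact (mul_nonneg_iff_of_pos_left huv).mp hm
  -- Cross bound
  have hM1 : (r*N1)^2 = A1^2+B1^2 := by rw [mul_pow, hr, hN1, hA1, hB1]; ring
  have hM2 : (s*N2)^2 = A2^2+B2^2 := by rw [mul_pow, hs, hN2, hA2, hB2]; ring
  have hCross : -(2*(γ - δ*c)*N1*N2) ≤ Cross := by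
    have cb := cs_bound c S A1 B1 A2 B2 (r*N1) (s*N2) h.hS (le_of_lt hc0) hM1 hM2
      (by positivity) (by positivity)
    have hco : (0:ℝ) ≤ 2*δ*(2-q)*SMQ := by
      have : (0:ℝ) ≤ 2-q := by linarith
      positivity
    have := mul_le_mul_of_nonneg_left cb hco
    rw [hCrossdef]
    calc -(2*(γ - δ*c)*N1*N2) = 2*δ*(2-q)*SMQ*(-((1+c)*(r*N1)*(s*N2))) := by rw [hγ]; ring
      _ ≤ 2*δ*(2-q)*SMQ*(2*c*A1*A2 + S*(A1*B2 - A2*B1)) := this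
  -- amgm
  have hαpos : 0 < α := by rw [hα]; positivity
  have h2q := h.h2q
  have e2qnn : (0:ℝ) ≤ 2-q := by linarith
  have hqc2c : q*c ≤ 2*c := by linarith only [mul_nonneg e2qnn hc0.le]
  have ht2 : (x^2+y^2)*SMQ ≤ SQ2 := by
    have e1 : ((x^2+y^2)*SMQ)*S2 = (SMQ*r*s)^2 := by
      rw [← hr, ← hSMQ, ← hs]; ring
    have e2 : (SMQ*r*s)^2 ≤ 1 := by nlinarith only [ht, htnn]
    have e3 : ((x^2+y^2)*SMQ)*S2 ≤ SQ2*S2 := by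
      rw [e1]; linarith only [e2, hSS]
    exact le_of_mul_le_mul_right e3 hS2
  have hβlow : SQ2*((81/2)*δ*c) ≤ β := by
    have p1 : SQ2*((85/2)*δ*c) ≤ q*SQ2*((q*c-(2-q))/2) := by
      have e : SQ2*((85/2)*δ*c) = q*SQ2*(ε*(q-1)*c) := by
        rw [h.hδ]; ring
      rw [e]
      have : (0:ℝ) ≤ q*SQ2 := by positivity
      exact mul_le_mul_of_nonneg_left hLq this
    have e2q : (0:ℝ) ≤ 2-q := by linarith
    have b1 : q-(2-q)*c ≤ 2 := by
      linarith only [mul_nonneg e2qnn hc0.le, hq2]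
    have b2 : (0:ℝ) ≤ q-(2-q)*c := by
      linarith only [mul_le_mul_of_nonneg_left h.hc1 e2qnn, hq1]
    have b3 : (0:ℝ) ≤ (x^2+y^2)*SMQ := by positivity
    have m1 : (q-(2-q)*c)*((x^2+y^2)*SMQ) ≤ 2*SQ2 :=
      mul_le_mul b1 ht2 b3 (by norm_num)
    have m2 : (2-q)*((q-(2-q)*c)*((x^2+y^2)*SMQ)) ≤ (2*c)*(2*SQ2) := by
      have b4 : (0:ℝ) ≤ (q-(2-q)*c)*((x^2+y^2)*SMQ) := mul_nonneg b2 b3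
      have b5 : 2-q ≤ 2*c := by linarith only [h2q, hqc2c]
      exact mul_le_mul b5 m1 b4 (by positivity)
    have p2 : -(2*δ*c*SQ2) ≤ δ*(2-q)*((x^2+y^2)*SMQ)*(((2-q)*c-q)/2) := by
      have e : δ*(2-q)*((x^2+y^2)*SMQ)*(((2-q)*c-q)/2)
          = -(δ/2)*((2-q)*((q-(2-q)*c)*((x^2+y^2)*SMQ))) := by ring
      rw [e]
      have := mul_le_mul_of_nonneg_left m2 (by positivity : (0:ℝ) ≤ δ/2)
      linarith only [this]
    rw [hβ]; linarith only [p1, p2]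
  have hγ5 : γ ≤ 5*(δ*c) := by
    have hg1 : (2-q)*(SMQ*r*s) ≤ q*c := by
      have := mul_le_mul_of_nonneg_left ht e2qnn
      rw [mul_one] at this
      linarith only [this, h2q]
    have hg2 : (1+c)*((2-q)*(SMQ*r*s)) ≤ 2*(2*c) := by
      have b1 : 1+c ≤ 2 := by linarith [h.hc1]
      have b2 : (0:ℝ) ≤ (2-q)*(SMQ*r*s) := mul_nonneg e2qnn htnn
      have := mul_le_mul b1 (le_trans hg1 hqc2c) b2 (by norm_num : (0:ℝ) ≤ 2)
      linarith only [this]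
    rw [hγ]
    linarith only [mul_le_mul_of_nonneg_left hg2 hδ0.le]
  have hγnn : 0 ≤ γ := by
    rw [hγ]
    have h1 : (0:ℝ) ≤ 1+c := by linarith
    have h2 : (0:ℝ) ≤ δ*(2-q)*SMQ*r*s*(1+c) :=
      mul_nonneg (mul_nonneg (mul_nonneg (mul_nonneg (mul_nonneg hδ0.le e2qnn) hSMQpos.le) hrnn) hspos.le) h1
    have h3 : (0:ℝ) ≤ δ*c := mul_nonneg hδ0.le hc0.le
    linarith only [h2, h3]
  have hγ2 : γ^2 ≤ α*β := by
    have s1 : α*(SQ2*((81/2)*δ*c)) ≤ α*β := mul_le_mul_of_nonneg_left hβlow (le_of_lt hαpos)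
    have s2 : α*(SQ2*((81/2)*δ*c)) = 81*(δ*c)^2*(S2*SQ2) := by rw [hα]; ring
    have s3 : γ^2 ≤ 25*(δ*c)^2 := by nlinarith only [hγ5, hγnn]
    rw [hSS] at s2
    calc γ^2 ≤ 25*(δ*c)^2 := s3
      _ ≤ 81*(δ*c)^2*1 := by linarith only [sq_nonneg (δ*c)]
      _ = α*(SQ2*((81/2)*δ*c)) := s2.symm
      _ ≤ α*β := s1
  have main := amgm α β γ N1 N2 hαpos hγ2 hN1nn hN2nn
  have hD1 : 2*δ*S2*(c*(w1^2+w2^2)) = α*N1^2 := by rw [hα, hN1]; ring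
  have hBN2 : β*(w3^2+w4^2) = β*N2^2 := by rw [hN2]
  have goalsplit : (p*R2 + 2*δ*S2)*(c*(w1^2+w2^2))
      + p*(p-2)*R4*(A1*(c*A1 - S*B1))
      + 2*δ*(2-q)*SMQ*(2*c*A1*A2 + S*(A1*B2 - A2*B1))
      + (q*SQ2 + δ*(2-q)*(x^2+y^2)*SMQ)*(c*(w3^2+w4^2))
      + (q*(q-2)*SQ4 - δ*q*(2-q)*(x^2+y^2)*SMQ2)*(A2*(c*A2 + S*B2))
      = P + 2*δ*S2*(c*(w1^2+w2^2)) + Cross + T3 := by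
    rw [hPdef, hCrossdef, hT3def]; ring
  rw [goalsplit, hD1]
  have e : 2*γ*N1*N2 - 2*(γ - δ*c)*N1*N2 = 2*δ*c*N1*N2 := by ring
  linarith only [main, hP, hT3, hCross, hBN2, e]

lemma regionB (h : Basics p q δ ε c S) (x y u v w1 w2 w3 w4 R2 R4 SQ2 SQ4 N1 N2 NZ NH : ℝ)
    (hNZ : NZ = x^2+y^2) (hNH : NH = u^2+v^2)
    (hR2 : 0 < R2) (hSQ2 : 0 < SQ2)
    (hR4 : R4*NZ = R2) (hSQ4 : SQ4*NH = SQ2)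
    (hprod : 1 ≤ R2*SQ2)
    (hxy : 0 < NZ) (huv : 0 < NH)
    (hN1 : N1^2 = w1^2+w2^2) (hN2 : N2^2 = w3^2+w4^2) (hN1nn : 0 ≤ N1) (hN2nn : 0 ≤ N2) :
    2*δ*c*N1*N2 ≤
      (1+2*δ/p)*((p*R2)*(c*(w1^2+w2^2)) +
        p*(p-2)*R4*((x*w1+y*w2)*(c*(x*w1+y*w2) - S*(x*w2-y*w1))))
      + (1+δ*(2/q-1))*((q*SQ2)*(c*(w3^2+w4^2)) +
        q*(q-2)*SQ4*((u*w3+v*w4)*(c*(u*w3+v*w4) + S*(u*w4-v*w3)))) := by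
  subst hNZ
  subst hNH
  have hc0 := h.hc0
  have hδ0 := h.hδ0
  have hq1 := h.hq1
  have hq2 := h.hq2
  have hp := h.hp
  have hε0 := h.hε0
  set A1 := x*w1+y*w2 with hA1
  set B1 := x*w2-y*w1 with hB1
  set A2 := u*w3+v*w4 with hA2
  set B2 := u*w4-v*w3 with hB2
  set X1 := (p*R2)*(c*(w1^2+w2^2)) + p*(p-2)*R4*(A1*(c*A1 - S*B1)) with hX1
  set X2 := (q*SQ2)*(c*(w3^2+w4^2)) + q*(q-2)*SQ4*(A2*(c*A2 + S*B2)) with hX2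
  set α := p*R2*((p*c-(p-2))/2) with hα
  set β := q*SQ2*((q*c-(2-q))/2) with hβ
  -- block 1 eigen bound
  have hT1 : α*(w1^2+w2^2) ≤ X1 := by
    rw [← sub_nonneg]
    have expand : (x^2+y^2) * (X1 - α*(w1^2+w2^2)) =
        (p*R2*((p-2)/2))*((1-c)*B1^2+(1+c)*A1^2-2*S*B1*A1) := by
      rw [hX1, hα, hA1, hB1]
      linear_combination (p*(p-2)*((x*w1+y*w2)*(c*(x*w1+y*w2) - S*(x*w2-y*w1)))) * hR4
    have hm : 0 ≤ (x^2+y^2) * (X1 - α*(w1^2+w2^2)) := by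
      rw [expand]
      have h2 : (0:ℝ) ≤ p*R2*((p-2)/2) := by
        have : (0:ℝ) ≤ (p-2)/2 := by linarith
        positivity
      exact mul_nonneg h2 (key c S B1 A1 h.hS)
    exact (mul_nonneg_iff_of_pos_left hxy).mp hm
  have hT3 : β*(w3^2+w4^2) ≤ X2 := by
    rw [← sub_nonneg]
    have expand : (u^2+v^2) * (X2 - β*(w3^2+w4^2)) =
        (q*SQ2*((2-q)/2))*((1-c)*A2^2+(1+c)*B2^2-2*S*A2*B2) := by
      rw [hX2, hβ, hA2, hB2]
      linear_combination (q*(q-2)*((u*w3+v*w4)*(c*(u*w3+v*w4) + S*(u*w4-v*w3)))) * hSQ4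
    have hm : 0 ≤ (u^2+v^2) * (X2 - β*(w3^2+w4^2)) := by
      rw [expand]
      have h2 : (0:ℝ) ≤ q*SQ2*((2-q)/2) := by
        have h3 : (0:ℝ) ≤ (2-q)/2 := by linarith
        have h4 : (0:ℝ) ≤ q*SQ2 := by positivity
        exact mul_nonneg h4 h3
      exact mul_nonneg h2 (key c S A2 B2 h.hS)
    exact (mul_nonneg_iff_of_pos_left huv).mp hm
  -- positivity of eigenvalues
  have hLp : ε*c ≤ (p*c-(p-2))/2 := by linarith [h.hpc]
  have hLq : ε*(q-1)*c ≤ (q*c-(2-q))/2 := by linarith [h.hqc]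
  have hαpos : 0 < α := by
    have : 0 < ε*c := mul_pos hε0 hc0
    have : 0 < (p*c-(p-2))/2 := lt_of_lt_of_le this hLp
    positivity
  have hγ2 : (δ*c)^2 ≤ α*β := by
    have hpR2 : (0:ℝ) ≤ p*R2 := by positivity
    have h1 : p*R2*(ε*c) ≤ α := mul_le_mul_of_nonneg_left hLp hpR2
    have hqSQ2 : (0:ℝ) ≤ q*SQ2 := by positivity
    have h2 : q*SQ2*(ε*(q-1)*c) ≤ β := mul_le_mul_of_nonneg_left hLq hqSQ2
    have hA : (0:ℝ) ≤ q*(q-1)*ε^2 := by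
      have : (0:ℝ) < q-1 := by linarith
      positivity
    have hB : 4*(q*(q-1)) ≤ 7225*p := by nlinarith
    have step := mul_le_mul_of_nonneg_left hB hA
    have h4 : δ^2 ≤ p*q*(q-1)*ε^2 := by
      rw [h.hδ]
      have e : (2*q*(q-1)*ε/85)^2 = (q*(q-1)*ε^2)*(4*(q*(q-1)))/7225 := by ring
      rw [e]
      have e2 : p*q*(q-1)*ε^2 = (q*(q-1)*ε^2)*(7225*p)/7225 := by ring
      rw [e2]
      linarith
    have h5 : (δ*c)^2 ≤ p*q*(q-1)*ε^2*c^2 := by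
      have := mul_le_mul_of_nonneg_right h4 (sq_nonneg c)
      calc (δ*c)^2 = δ^2*c^2 := by ring
        _ ≤ p*q*(q-1)*ε^2*c^2 := by linarith
    have h6 : p*q*(q-1)*ε^2*c^2 ≤ p*q*(q-1)*ε^2*c^2*(R2*SQ2) := by
      have hpos : (0:ℝ) ≤ p*q*(q-1)*ε^2*c^2 := by
        have : (0:ℝ) < q-1 := by linarith
        positivity
      exact le_mul_of_one_le_right hpos hprod
    have h8 : 0 ≤ q*SQ2*(ε*(q-1)*c) := by
      have : 0 < q-1 := by linarith
      positivity
    calc (δ*c)^2 ≤ p*q*(q-1)*ε^2*c^2 := h5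
      _ ≤ p*q*(q-1)*ε^2*c^2*(R2*SQ2) := h6
      _ = (p*R2*(ε*c))*(q*SQ2*(ε*(q-1)*c)) := by ring
      _ ≤ α*β := mul_le_mul h1 h2 h8 (le_trans (by positivity) h1)
  have main := amgm α β (δ*c) N1 N2 hαpos hγ2 hN1nn hN2nn
  have ha : (1:ℝ) ≤ 1+2*δ/p := by
    have : 0 ≤ 2*δ/p := by positivity
    linarith
  have hb : (1:ℝ) ≤ 1+δ*(2/q-1) := by
    have h1 : 0 < 2/q - 1 := by
      rw [lt_sub_iff_add_lt]
      rw [lt_div_iff₀ (by linarith : (0:ℝ) < q)]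
      linarith
    nlinarith
  have hX1nn : 0 ≤ X1 := by
    have : 0 ≤ α*(w1^2+w2^2) := by positivity
    linarith
  have hX2nn : 0 ≤ X2 := by
    have hq10 : (0:ℝ) < q - 1 := by linarith
    have h0 : 0 < (q*c-(2-q))/2 := lt_of_lt_of_le (by positivity : 0 < ε*(q-1)*c) hLq
    have hβnn : 0 ≤ β := by
      rw [hβ]
      have : (0:ℝ) ≤ q*SQ2 := by positivity
      exact mul_nonneg this (le_of_lt h0)
    have : 0 ≤ β*(w3^2+w4^2) := mul_nonneg hβnn (by positivity)
    linarith
  calc 2*δ*c*N1*N2 = 2*(δ*c)*N1*N2 := by ring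
    _ ≤ α*N1^2 + β*N2^2 := main
    _ = α*(w1^2+w2^2) + β*(w3^2+w4^2) := by rw [hN1, hN2]
    _ ≤ X1 + X2 := by linarith
    _ ≤ (1+2*δ/p)*X1 + (1+δ*(2/q-1))*X2 := by
        have s1 := mul_le_mul_of_nonneg_right ha hX1nn
        have s2 := mul_le_mul_of_nonneg_right hb hX2nn
        rw [one_mul] at s1 s2
        linarith


end
end NTscal


namespace NTproof

/-- coordinates of a complex number -/
def cd (i : Fin 2) (z : ℂ) : ℝ := ![z.re, z.im] i

lemma cd_add_smul (i j : Fin 2) (z : ℂ) (s : ℝ) :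
    cd j (z + (s:ℂ)*dir i) = cd j z + s*(if i = j then 1 else 0) := by
  fin_cases i <;> fin_cases j <;>
    simp [cd, dir, Complex.add_re, Complex.add_im, Complex.mul_re, Complex.mul_im]

lemma ns_eval (i : Fin 2) (z : ℂ) (s : ℝ) :
    Complex.normSq (z + (s:ℂ)*dir i) = Complex.normSq z + 2*(cd i z)*s + s^2 := by
  fin_cases i <;>
    simp [cd, dir, Complex.normSq_apply, Complex.add_re, Complex.add_im,
      Complex.mul_re, Complex.mul_im] <;> ring

lemma hasDerivAt_ns (i : Fin 2) (z : ℂ) :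
    HasDerivAt (fun s : ℝ => Complex.normSq (z + (s:ℂ)*dir i)) (2*cd i z) 0 := by
  have h : (fun s : ℝ => Complex.normSq (z + (s:ℂ)*dir i))
      = fun s => Complex.normSq z + 2*(cd i z)*s + s^2 := funext (ns_eval i z)
  rw [h]
  have h1 := ((hasDerivAt_id (0:ℝ)).const_mul (2*cd i z)).const_add (Complex.normSq z)
  have h2 := hasDerivAt_pow 2 (0:ℝ)
  simpa using h1.fun_add h2

lemma hasDerivAt_mul_sq_rpow {a : ℝ} (ha : 0 < a) :
    HasDerivAt (fun s : ℝ => s * (s^2)^a) 0 0 := by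
  rw [hasDerivAt_iff_tendsto_slope]
  have hev : slope (fun s : ℝ => s * ((s^2)^a)) 0 =ᶠ[nhdsWithin (0:ℝ) {(0:ℝ)}ᶜ]
      fun s => (s^2)^a := by
    filter_upwards [self_mem_nhdsWithin] with s hs
    have hs' : s ≠ 0 := hs
    rw [slope_def_field]
    field_simp
    ring
  rw [Filter.tendsto_congr' hev]
  have h1 : Filter.Tendsto (fun s:ℝ => s^2) (nhds 0) (nhds 0) := by
    simpa using (continuous_pow 2).tendsto (0:ℝ)
  have h2 : Filter.Tendsto (fun x:ℝ => x^a) (nhds (0:ℝ)) (nhds 0) := by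
    have := (Real.continuousAt_rpow_const 0 a (Or.inr ha.le)).tendsto
    simpa [Real.zero_rpow (ne_of_gt ha)] using this
  exact (h2.comp (h1.mono_left nhdsWithin_le_nhds))

lemma abs_rpow_eq (z : ℂ) (a : ℝ) :
    ‖z‖ ^ a = Complex.normSq z ^ (a/2) := by
  rw [Complex.norm_def, Real.sqrt_eq_rpow, ← Real.rpow_mul (Complex.normSq_nonneg z)]
  congr 1
  ring

/-- Region A : below the critical curve. -/
def A (p : ℝ) : Set (ℂ × ℂ) :=
  {z | ‖z.1‖ ^ p < ‖z.2‖ ^ qexp p ∧ z.2 ≠ 0}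

/-- Region B : above the critical curve. -/
def B (p : ℝ) : Set (ℂ × ℂ) :=
  {z | ‖z.2‖ ^ qexp p < ‖z.1‖ ^ p ∧ z.2 ≠ 0}

lemma contAbs1 (p : ℝ) (hp : 0 < p) : Continuous (fun z : ℂ × ℂ => ‖z.1‖ ^ p) :=
  (continuous_norm.comp continuous_fst).rpow_const (fun _ => Or.inr hp.le)

lemma contAbs2 (p : ℝ) (hp : 0 < p) : Continuous (fun z : ℂ × ℂ => ‖z.2‖ ^ p) :=
  (continuous_norm.comp continuous_snd).rpow_const (fun _ => Or.inr hp.le)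

lemma isOpen_A (p : ℝ) (hp : 2 < p) : IsOpen (A p) := by
  have hq : 0 < qexp p := by
    unfold qexp; apply div_pos <;> linarith
  have h1 : IsOpen {z : ℂ × ℂ | ‖z.1‖ ^ p < ‖z.2‖ ^ qexp p} :=
    isOpen_lt (contAbs1 p (by linarith)) (contAbs2 (qexp p) hq)
  have h2 : IsOpen {z : ℂ × ℂ | z.2 ≠ 0} :=
    isOpen_compl_singleton.preimage continuous_snd
  exact h1.inter h2

lemma isOpen_B (p : ℝ) (hp : 2 < p) : IsOpen (B p) := by
  have hq : 0 < qexp p := by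
    unfold qexp; apply div_pos <;> linarith
  have h1 : IsOpen {z : ℂ × ℂ | ‖z.2‖ ^ qexp p < ‖z.1‖ ^ p} :=
    isOpen_lt (contAbs2 (qexp p) hq) (contAbs1 p (by linarith))
  have h2 : IsOpen {z : ℂ × ℂ | z.2 ≠ 0} :=
    isOpen_compl_singleton.preimage continuous_snd
  exact h1.inter h2

lemma Q_eq_A (p δ : ℝ) {ζ η : ℂ} (h : (ζ, η) ∈ A p) :
    Q p δ ζ η = Complex.normSq ζ ^ (p/2) + Complex.normSq η ^ (qexp p/2)
      + δ * (Complex.normSq ζ * Complex.normSq η ^ ((2 - qexp p)/2)) := by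
  replace h : ‖ζ‖ ^ p < ‖η‖ ^ qexp p ∧ η ≠ 0 := h
  unfold Q
  rw [if_pos (le_of_lt h.1), abs_rpow_eq, abs_rpow_eq, abs_rpow_eq, abs_rpow_eq]
  norm_num [Real.rpow_one]

lemma Q_eq_B (p δ : ℝ) {ζ η : ℂ} (h : (ζ, η) ∈ B p) :
    Q p δ ζ η = (1 + 2*δ/p) * Complex.normSq ζ ^ (p/2)
      + (1 + δ*(2/qexp p - 1)) * Complex.normSq η ^ (qexp p/2) := by
  replace h : ‖η‖ ^ qexp p < ‖ζ‖ ^ p ∧ η ≠ 0 := h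
  unfold Q
  rw [if_neg (not_le.mpr h.1), abs_rpow_eq, abs_rpow_eq]
  ring

lemma evA1 (p : ℝ) (hp : 2 < p) {ζ η : ℂ} (h : (ζ, η) ∈ A p) (i : Fin 2) :
    ∀ᶠ s : ℝ in nhds 0, (ζ + (s:ℂ)*dir i, η) ∈ A p := by
  have hc : Continuous (fun s : ℝ => ((ζ + (s:ℂ)*dir i, η) : ℂ × ℂ)) := by
    apply Continuous.prodMk
    · exact continuous_const.add ((Complex.continuous_ofReal).mul continuous_const)
    · exact continuous_const
  have h0 : (fun s : ℝ => ((ζ + (s:ℂ)*dir i, η) : ℂ × ℂ)) 0 ∈ A p := by simpa using h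
  exact hc.continuousAt.eventually_mem ((isOpen_A p hp).mem_nhds h0)

lemma evA2 (p : ℝ) (hp : 2 < p) {ζ η : ℂ} (h : (ζ, η) ∈ A p) (i : Fin 2) :
    ∀ᶠ s : ℝ in nhds 0, (ζ, η + (s:ℂ)*dir i) ∈ A p := by
  have hc : Continuous (fun s : ℝ => ((ζ, η + (s:ℂ)*dir i) : ℂ × ℂ)) := by
    apply Continuous.prodMk
    · exact continuous_const
    · exact continuous_const.add ((Complex.continuous_ofReal).mul continuous_const)
  have h0 : (fun s : ℝ => ((ζ, η + (s:ℂ)*dir i) : ℂ × ℂ)) 0 ∈ A p := by simpa using h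
  exact hc.continuousAt.eventually_mem ((isOpen_A p hp).mem_nhds h0)

lemma evB1 (p : ℝ) (hp : 2 < p) {ζ η : ℂ} (h : (ζ, η) ∈ B p) (i : Fin 2) :
    ∀ᶠ s : ℝ in nhds 0, (ζ + (s:ℂ)*dir i, η) ∈ B p := by
  have hc : Continuous (fun s : ℝ => ((ζ + (s:ℂ)*dir i, η) : ℂ × ℂ)) := by
    apply Continuous.prodMk
    · exact continuous_const.add ((Complex.continuous_ofReal).mul continuous_const)
    · exact continuous_const
  have h0 : (fun s : ℝ => ((ζ + (s:ℂ)*dir i, η) : ℂ × ℂ)) 0 ∈ B p := by simpa using h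
  exact hc.continuousAt.eventually_mem ((isOpen_B p hp).mem_nhds h0)

lemma evB2 (p : ℝ) (hp : 2 < p) {ζ η : ℂ} (h : (ζ, η) ∈ B p) (i : Fin 2) :
    ∀ᶠ s : ℝ in nhds 0, (ζ, η + (s:ℂ)*dir i) ∈ B p := by
  have hc : Continuous (fun s : ℝ => ((ζ, η + (s:ℂ)*dir i) : ℂ × ℂ)) := by
    apply Continuous.prodMk
    · exact continuous_const
    · exact continuous_const.add ((Complex.continuous_ofReal).mul continuous_const)
  have h0 : (fun s : ℝ => ((ζ, η + (s:ℂ)*dir i) : ℂ × ℂ)) 0 ∈ B p := by simpa using h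
  exact hc.continuousAt.eventually_mem ((isOpen_B p hp).mem_nhds h0)



variable {p δ : ℝ}

lemma ns_smul_dir (i : Fin 2) (s : ℝ) : Complex.normSq ((s:ℂ)*dir i) = s^2 := by
  fin_cases i <;> simp [dir, Complex.normSq_mul, Complex.normSq_ofReal] <;> ring

lemma cd_zero (i : Fin 2) : cd i (0:ℂ) = 0 := by fin_cases i <;> simp [cd]

lemma ns_base (i : Fin 2) (z : ℂ) :
    Complex.normSq (z + ((0:ℝ):ℂ)*dir i) = Complex.normSq z := by norm_num

/-- chain rule for `normSq ^ a` along a coordinate line, with the exact shape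
produced by `HasDerivAt.rpow_const`. -/
lemma hasDerivAt_ns_rpow (i : Fin 2) (z : ℂ) (a : ℝ)
    (hz : Complex.normSq z ≠ 0 ∨ 1 ≤ a) :
    HasDerivAt (fun s : ℝ => Complex.normSq (z + (s:ℂ)*dir i) ^ a)
      (2*cd i z * a * Complex.normSq z ^ (a-1)) 0 := by
  have h0 := (hasDerivAt_ns i z).rpow_const (p := a) (by rw [ns_base]; exact hz)
  rwa [ns_base] at h0

lemma hasDerivAt_affine (K C : ℝ) : HasDerivAt (fun s : ℝ => C + s*K) K 0 := by
  simpa using ((hasDerivAt_id (0:ℝ)).mul_const K).const_add C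

lemma A_snd_ne {z : ℂ × ℂ} (h : z ∈ A p) : Complex.normSq z.2 ≠ 0 := by
  simpa [Complex.normSq_eq_zero] using h.2

lemma B_snd_ne {z : ℂ × ℂ} (h : z ∈ B p) : Complex.normSq z.2 ≠ 0 := by
  simpa [Complex.normSq_eq_zero] using h.2

lemma B_fst_ne (hp : 2 < p) {z : ℂ × ℂ} (h : z ∈ B p) : Complex.normSq z.1 ≠ 0 := by
  have hq : 0 < qexp p := by unfold qexp; apply div_pos <;> linarith
  have habs : 0 < ‖z.2‖ := by
    exact norm_pos_iff.mpr h.2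
  have h1 : (0:ℝ) < ‖z.2‖ ^ qexp p := Real.rpow_pos_of_pos habs _
  have h2 : (0:ℝ) < ‖z.1‖ ^ p := lt_trans h1 h.1
  have h3 : z.1 ≠ 0 := by
    intro hz
    rw [hz] at h2
    simp at h2
    rw [Real.zero_rpow (by linarith : p ≠ 0)] at h2
    exact lt_irrefl 0 h2
  simpa [Complex.normSq_eq_zero] using h3

/-! ### First derivatives, region A -/

lemma dzeta_A (δ : ℝ) (hp : 2 < p) {ζ η : ℂ} (h : (ζ, η) ∈ A p) (j : Fin 2) :
    dζ p δ j ζ η = (p * Complex.normSq ζ ^ (p/2-1)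
      + 2*δ*Complex.normSq η ^ ((2-qexp p)/2)) * cd j ζ := by
  have hev : (fun s : ℝ => Q p δ (ζ + (s:ℂ)*dir j) η) =ᶠ[nhds 0]
      (fun s : ℝ => Complex.normSq (ζ + (s:ℂ)*dir j) ^ (p/2)
        + Complex.normSq η ^ (qexp p/2)
        + δ * (Complex.normSq (ζ + (s:ℂ)*dir j) * Complex.normSq η ^ ((2 - qexp p)/2))) :=
    (evA1 p hp h j).mono (fun s hs => Q_eq_A p δ hs)
  unfold dζ
  have h1 := hasDerivAt_ns_rpow j ζ (p/2) (Or.inr (by linarith))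
  have h2 : HasDerivAt (fun _ : ℝ => Complex.normSq η ^ (qexp p/2)) 0 0 := hasDerivAt_const _ _
  have h3 : HasDerivAt (fun s : ℝ =>
      δ * (Complex.normSq (ζ + (s:ℂ)*dir j) * Complex.normSq η ^ ((2 - qexp p)/2)))
      (δ * ((2*cd j ζ) * Complex.normSq η ^ ((2 - qexp p)/2))) 0 :=
    ((hasDerivAt_ns j ζ).mul_const _).const_mul δ
  have H := (((h1.add h2).add h3).congr_of_eventuallyEq hev).deriv
  rw [H]
  ring

lemma deta_A (δ : ℝ) (hp : 2 < p) {ζ η : ℂ} (h : (ζ, η) ∈ A p) (j : Fin 2) :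
    dη p δ j ζ η = (qexp p * Complex.normSq η ^ (qexp p/2-1)
      + δ*(2-qexp p)*Complex.normSq ζ * Complex.normSq η ^ ((2-qexp p)/2-1)) * cd j η := by
  have hev : (fun s : ℝ => Q p δ ζ (η + (s:ℂ)*dir j)) =ᶠ[nhds 0]
      (fun s : ℝ => Complex.normSq ζ ^ (p/2)
        + Complex.normSq (η + (s:ℂ)*dir j) ^ (qexp p/2)
        + δ * (Complex.normSq ζ * Complex.normSq (η + (s:ℂ)*dir j) ^ ((2 - qexp p)/2))) :=
    (evA2 p hp h j).mono (fun s hs => Q_eq_A p δ hs)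
  unfold dη
  have hne : Complex.normSq η ≠ 0 := A_snd_ne h
  have h1 : HasDerivAt (fun _ : ℝ => Complex.normSq ζ ^ (p/2)) 0 0 := hasDerivAt_const _ _
  have h2 := hasDerivAt_ns_rpow j η (qexp p/2) (Or.inl hne)
  have h3 : HasDerivAt (fun s : ℝ =>
      δ * (Complex.normSq ζ * Complex.normSq (η + (s:ℂ)*dir j) ^ ((2 - qexp p)/2)))
      (δ * (Complex.normSq ζ *
        (2*cd j η * ((2 - qexp p)/2) * Complex.normSq η ^ ((2 - qexp p)/2-1)))) 0 :=
    ((hasDerivAt_ns_rpow j η ((2 - qexp p)/2) (Or.inl hne)).const_mul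
      (Complex.normSq ζ)).const_mul δ
  have H := (((h1.add h2).add h3).congr_of_eventuallyEq hev).deriv
  rw [H]
  ring

/-! ### First derivatives, region B -/

lemma dzeta_B (δ : ℝ) (hp : 2 < p) {ζ η : ℂ} (h : (ζ, η) ∈ B p) (j : Fin 2) :
    dζ p δ j ζ η = ((1 + 2*δ/p) * p * Complex.normSq ζ ^ (p/2-1)) * cd j ζ := by
  have hev : (fun s : ℝ => Q p δ (ζ + (s:ℂ)*dir j) η) =ᶠ[nhds 0]
      (fun s : ℝ => (1 + 2*δ/p) * Complex.normSq (ζ + (s:ℂ)*dir j) ^ (p/2)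
        + (1 + δ*(2/qexp p - 1)) * Complex.normSq η ^ (qexp p/2)) :=
    (evB1 p hp h j).mono (fun s hs => Q_eq_B p δ hs)
  unfold dζ
  have h1 := (hasDerivAt_ns_rpow j ζ (p/2) (Or.inr (by linarith))).const_mul (1 + 2*δ/p)
  have h2 : HasDerivAt (fun _ : ℝ => (1 + δ*(2/qexp p - 1)) * Complex.normSq η ^ (qexp p/2)) 0 0 :=
    hasDerivAt_const _ _
  have H := ((h1.add h2).congr_of_eventuallyEq hev).deriv
  rw [H]
  ring

lemma deta_B (δ : ℝ) (hp : 2 < p) {ζ η : ℂ} (h : (ζ, η) ∈ B p) (j : Fin 2) :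
    dη p δ j ζ η = ((1 + δ*(2/qexp p - 1)) * qexp p * Complex.normSq η ^ (qexp p/2-1)) * cd j η := by
  have hev : (fun s : ℝ => Q p δ ζ (η + (s:ℂ)*dir j)) =ᶠ[nhds 0]
      (fun s : ℝ => (1 + 2*δ/p) * Complex.normSq ζ ^ (p/2)
        + (1 + δ*(2/qexp p - 1)) * Complex.normSq (η + (s:ℂ)*dir j) ^ (qexp p/2)) :=
    (evB2 p hp h j).mono (fun s hs => Q_eq_B p δ hs)
  unfold dη
  have hne : Complex.normSq η ≠ 0 := B_snd_ne h
  have h1 : HasDerivAt (fun _ : ℝ => (1 + 2*δ/p) * Complex.normSq ζ ^ (p/2)) 0 0 :=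
    hasDerivAt_const _ _
  have h2 := (hasDerivAt_ns_rpow j η (qexp p/2) (Or.inl hne)).const_mul (1 + δ*(2/qexp p - 1))
  have H := ((h1.add h2).congr_of_eventuallyEq hev).deriv
  rw [H]
  ring


/-! ### Second derivatives, region A -/

lemma H1_A (δ : ℝ) (hp : 2 < p) {ζ η : ℂ} (h : (ζ, η) ∈ A p) (i j : Fin 2) :
    H1 p δ ζ η i j = (p * Complex.normSq ζ ^ (p/2-1)
        + 2*δ*Complex.normSq η ^ ((2-qexp p)/2)) * (if i = j then 1 else 0)
      + p*(p-2)*Complex.normSq ζ ^ (p/2-2)*(cd i ζ * cd j ζ) := by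
  have hev : (fun s : ℝ => dζ p δ j (ζ + (s:ℂ)*dir i) η) =ᶠ[nhds 0]
      (fun s : ℝ => (p * Complex.normSq (ζ + (s:ℂ)*dir i) ^ (p/2-1)
        + 2*δ*Complex.normSq η ^ ((2-qexp p)/2)) * (cd j ζ + s*(if i = j then 1 else 0))) := by
    filter_upwards [evA1 p hp h i] with s hs
    rw [dzeta_A δ hp hs j, cd_add_smul]
  simp only [H1, Matrix.of_apply]
  rcases eq_or_ne (Complex.normSq ζ) 0 with hz | hz
  · have hζ : ζ = 0 := by rwa [Complex.normSq_eq_zero] at hz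
    subst hζ
    by_cases hij : i = j
    · subst hij
      have hev2 : (fun s : ℝ => dζ p δ i ((0:ℂ) + (s:ℂ)*dir i) η) =ᶠ[nhds 0]
          (fun s : ℝ => p * (s*(s^2)^(p/2-1))
            + (2*δ*Complex.normSq η ^ ((2-qexp p)/2)) * s) := by
        refine hev.trans (Filter.Eventually.of_forall fun s => ?_)
        simp only [zero_add, ns_smul_dir, cd_zero, eq_self_iff_true, if_true, mul_one]
        ring
      have hd1 : HasDerivAt (fun s : ℝ => p * (s*(s^2)^(p/2-1))) (p*0) 0 :=
        (hasDerivAt_mul_sq_rpow (by linarith : (0:ℝ) < p/2-1)).const_mul p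
      have hd2 : HasDerivAt (fun s : ℝ => (2*δ*Complex.normSq η ^ ((2-qexp p)/2)) * s)
          ((2*δ*Complex.normSq η ^ ((2-qexp p)/2))*1) 0 :=
        (hasDerivAt_id (0:ℝ)).const_mul _
      rw [((hd1.add hd2).congr_of_eventuallyEq hev2).deriv]
      rw [Complex.normSq_zero, Real.zero_rpow (ne_of_gt (show (0:ℝ) < p/2-1 by linarith)),
        cd_zero, if_pos rfl]
      ring
    · have hev3 : (fun s : ℝ => dζ p δ j ((0:ℂ) + (s:ℂ)*dir i) η) =ᶠ[nhds 0]
          (fun _ : ℝ => (0:ℝ)) := by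
        refine hev.trans (Filter.Eventually.of_forall fun s => ?_)
        simp only [cd_zero, if_neg hij, mul_zero, add_zero, zero_add]
      rw [hev3.deriv_eq, deriv_const]
      rw [cd_zero, cd_zero, if_neg hij]
      ring
  · have h1 : HasDerivAt (fun s : ℝ => p * Complex.normSq (ζ + (s:ℂ)*dir i) ^ (p/2-1)
        + 2*δ*Complex.normSq η ^ ((2-qexp p)/2))
        (p * (2*cd i ζ * (p/2-1) * Complex.normSq ζ ^ (p/2-1-1))) 0 :=
      ((hasDerivAt_ns_rpow i ζ (p/2-1) (Or.inl hz)).const_mul p).add_const _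
    have h2 := hasDerivAt_affine (if i = j then (1:ℝ) else 0) (cd j ζ)
    have hd := ((h1.mul h2).congr_of_eventuallyEq hev).deriv
    rw [hd]
    rw [show p/2-1-1 = p/2-2 by ring]
    simp only [ns_base]
    ring

lemma H2_A (δ : ℝ) (hp : 2 < p) {ζ η : ℂ} (h : (ζ, η) ∈ A p) (i j : Fin 2) :
    H2 p δ ζ η i j
      = 2*δ*(2-qexp p)*Complex.normSq η ^ ((2-qexp p)/2-1)*(cd i ζ * cd j η) := by
  have hev : (fun s : ℝ => dη p δ j (ζ + (s:ℂ)*dir i) η) =ᶠ[nhds 0]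
      (fun s : ℝ => (qexp p * Complex.normSq η ^ (qexp p/2-1)
        + δ*(2-qexp p)*Complex.normSq (ζ + (s:ℂ)*dir i)
          * Complex.normSq η ^ ((2-qexp p)/2-1)) * cd j η) := by
    filter_upwards [evA1 p hp h i] with s hs
    rw [deta_A δ hp hs j]
  simp only [H2, Matrix.of_apply]
  have h1 : HasDerivAt (fun s : ℝ => qexp p * Complex.normSq η ^ (qexp p/2-1)
      + δ*(2-qexp p)*Complex.normSq (ζ + (s:ℂ)*dir i)
        * Complex.normSq η ^ ((2-qexp p)/2-1))
      (δ*(2-qexp p)*(2*cd i ζ) * Complex.normSq η ^ ((2-qexp p)/2-1)) 0 :=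
    (((hasDerivAt_ns i ζ).const_mul (δ*(2-qexp p))).mul_const
      (Complex.normSq η ^ ((2-qexp p)/2-1))).const_add _
  have hd := ((h1.mul_const (cd j η)).congr_of_eventuallyEq hev).deriv
  rw [hd]
  ring

lemma H3_A (δ : ℝ) (hp : 2 < p) {ζ η : ℂ} (h : (ζ, η) ∈ A p) (i j : Fin 2) :
    H3 p δ ζ η i j = (qexp p * Complex.normSq η ^ (qexp p/2-1)
        + δ*(2-qexp p)*Complex.normSq ζ * Complex.normSq η ^ ((2-qexp p)/2-1))
          * (if i = j then 1 else 0)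
      + (qexp p*(qexp p-2)*Complex.normSq η ^ (qexp p/2-2)
        - δ*qexp p*(2-qexp p)*Complex.normSq ζ * Complex.normSq η ^ ((2-qexp p)/2-2))
          * (cd i η * cd j η) := by
  have hne : Complex.normSq η ≠ 0 := A_snd_ne h
  have hev : (fun s : ℝ => dη p δ j ζ (η + (s:ℂ)*dir i)) =ᶠ[nhds 0]
      (fun s : ℝ => (qexp p * Complex.normSq (η + (s:ℂ)*dir i) ^ (qexp p/2-1)
        + δ*(2-qexp p)*Complex.normSq ζ
          * Complex.normSq (η + (s:ℂ)*dir i) ^ ((2-qexp p)/2-1))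
        * (cd j η + s*(if i = j then 1 else 0))) := by
    filter_upwards [evA2 p hp h i] with s hs
    rw [deta_A δ hp hs j, cd_add_smul]
  simp only [H3, Matrix.of_apply]
  have h1 : HasDerivAt (fun s : ℝ => qexp p * Complex.normSq (η + (s:ℂ)*dir i) ^ (qexp p/2-1)
      + δ*(2-qexp p)*Complex.normSq ζ * Complex.normSq (η + (s:ℂ)*dir i) ^ ((2-qexp p)/2-1))
      (qexp p * (2*cd i η * (qexp p/2-1) * Complex.normSq η ^ (qexp p/2-1-1))
        + δ*(2-qexp p)*Complex.normSq ζ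
          * (2*cd i η * ((2-qexp p)/2-1) * Complex.normSq η ^ ((2-qexp p)/2-1-1))) 0 :=
    ((hasDerivAt_ns_rpow i η (qexp p/2-1) (Or.inl hne)).const_mul (qexp p)).add
      ((hasDerivAt_ns_rpow i η ((2-qexp p)/2-1) (Or.inl hne)).const_mul
        (δ*(2-qexp p)*Complex.normSq ζ))
  have h2 := hasDerivAt_affine (if i = j then (1:ℝ) else 0) (cd j η)
  have hd := ((h1.mul h2).congr_of_eventuallyEq hev).deriv
  rw [hd]
  rw [show qexp p/2-1-1 = qexp p/2-2 by ring, show (2-qexp p)/2-1-1 = (2-qexp p)/2-2 by ring]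
  simp only [Complex.ofReal_zero, zero_mul, add_zero, mul_zero, mul_one]
  ring

/-! ### Second derivatives, region B -/

lemma H1_B (δ : ℝ) (hp : 2 < p) {ζ η : ℂ} (h : (ζ, η) ∈ B p) (i j : Fin 2) :
    H1 p δ ζ η i j = (1+2*δ/p)*(p*Complex.normSq ζ ^ (p/2-1)*(if i = j then 1 else 0)
      + p*(p-2)*Complex.normSq ζ ^ (p/2-2)*(cd i ζ * cd j ζ)) := by
  have hz : Complex.normSq ζ ≠ 0 := B_fst_ne hp h
  have hev : (fun s : ℝ => dζ p δ j (ζ + (s:ℂ)*dir i) η) =ᶠ[nhds 0]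
      (fun s : ℝ => ((1 + 2*δ/p) * p * Complex.normSq (ζ + (s:ℂ)*dir i) ^ (p/2-1))
        * (cd j ζ + s*(if i = j then 1 else 0))) := by
    filter_upwards [evB1 p hp h i] with s hs
    rw [dzeta_B δ hp hs j, cd_add_smul]
  simp only [H1, Matrix.of_apply]
  have h1 : HasDerivAt (fun s : ℝ =>
      (1 + 2*δ/p) * p * Complex.normSq (ζ + (s:ℂ)*dir i) ^ (p/2-1))
      ((1 + 2*δ/p) * p * (2*cd i ζ * (p/2-1) * Complex.normSq ζ ^ (p/2-1-1))) 0 := by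
    have := (hasDerivAt_ns_rpow i ζ (p/2-1) (Or.inl hz)).const_mul ((1 + 2*δ/p) * p)
    convert this using 2 <;> ring
  have h2 := hasDerivAt_affine (if i = j then (1:ℝ) else 0) (cd j ζ)
  have hd := ((h1.mul h2).congr_of_eventuallyEq hev).deriv
  rw [hd]
  rw [show p/2-1-1 = p/2-2 by ring]
  simp only [Complex.ofReal_zero, zero_mul, add_zero, mul_zero, mul_one]
  ring

lemma H2_B (δ : ℝ) (hp : 2 < p) {ζ η : ℂ} (h : (ζ, η) ∈ B p) (i j : Fin 2) :
    H2 p δ ζ η i j = 0 := by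
  have hev : (fun s : ℝ => dη p δ j (ζ + (s:ℂ)*dir i) η) =ᶠ[nhds 0]
      (fun _ : ℝ => ((1 + δ*(2/qexp p - 1)) * qexp p * Complex.normSq η ^ (qexp p/2-1))
        * cd j η) := by
    filter_upwards [evB1 p hp h i] with s hs
    rw [deta_B δ hp hs j]
  simp only [H2, Matrix.of_apply]
  rw [hev.deriv_eq, deriv_const]

lemma H3_B (δ : ℝ) (hp : 2 < p) {ζ η : ℂ} (h : (ζ, η) ∈ B p) (i j : Fin 2) :
    H3 p δ ζ η i j = (1+δ*(2/qexp p-1))*(qexp p*Complex.normSq η ^ (qexp p/2-1)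
        *(if i = j then 1 else 0)
      + qexp p*(qexp p-2)*Complex.normSq η ^ (qexp p/2-2)*(cd i η * cd j η)) := by
  have hne : Complex.normSq η ≠ 0 := B_snd_ne h
  have hev : (fun s : ℝ => dη p δ j ζ (η + (s:ℂ)*dir i)) =ᶠ[nhds 0]
      (fun s : ℝ => ((1 + δ*(2/qexp p - 1)) * qexp p
        * Complex.normSq (η + (s:ℂ)*dir i) ^ (qexp p/2-1))
        * (cd j η + s*(if i = j then 1 else 0))) := by
    filter_upwards [evB2 p hp h i] with s hs
    rw [deta_B δ hp hs j, cd_add_smul]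
  simp only [H3, Matrix.of_apply]
  have h1 : HasDerivAt (fun s : ℝ =>
      (1 + δ*(2/qexp p - 1)) * qexp p * Complex.normSq (η + (s:ℂ)*dir i) ^ (qexp p/2-1))
      ((1 + δ*(2/qexp p - 1)) * qexp p
        * (2*cd i η * (qexp p/2-1) * Complex.normSq η ^ (qexp p/2-1-1))) 0 := by
    have := (hasDerivAt_ns_rpow i η (qexp p/2-1) (Or.inl hne)).const_mul
      ((1 + δ*(2/qexp p - 1)) * qexp p)
    convert this using 2 <;> ring
  have h2 := hasDerivAt_affine (if i = j then (1:ℝ) else 0) (cd j η)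
  have hd := ((h1.mul h2).congr_of_eventuallyEq hev).deriv
  rw [hd]
  rw [show qexp p/2-1-1 = qexp p/2-2 by ring]
  simp only [Complex.ofReal_zero, zero_mul, add_zero, mul_zero, mul_one]
  ring




end NTproof

set_option maxHeartbeats 4000000 in
theorem stmt14 (p ε δ φ : ℝ) (hp : 2 < p) (hε : ε ∈ Set.Ioo (0 : ℝ) (1 / 2))
    (hδ : δ = 2 * qexp p * (qexp p - 1) * ε / 85)
    (hφ : |φ| ≤ Real.arccos (1 - 2 / ((p - 2 * ε) / (1 - ε))))
    (ζ η : ℂ) (hη : η ≠ 0) (hne : ‖ζ‖ ^ p ≠ ‖η‖ ^ qexp p)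
    (ω₁ ω₂ : Fin 2 → ℝ) :
    2 * δ * Real.cos φ * Real.sqrt (ω₁ ⬝ᵥ ω₁) * Real.sqrt (ω₂ ⬝ᵥ ω₂) ≤
      ((RQ p δ φ ζ η).mulVec (Sum.elim ω₁ ω₂)) ⬝ᵥ (Sum.elim ω₁ ω₂) := by
  obtain ⟨hε0, hε1⟩ := hε
  have hp1 : (0:ℝ) < p - 1 := by linarith
  have hq : qexp p = p/(p-1) := rfl
  have hδ' : δ = 2*qexp p*(qexp p-1)*ε/85 := hδ
  -- cosine lower bound
  have hpden : (0:ℝ) < p - 2*ε := by linarith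
  have harg : 1 - 2/((p-2*ε)/(1-ε)) = (p-2)/(p-2*ε) := by
    have h1 : (1:ℝ) - ε ≠ 0 := by intro hx; rw [sub_eq_zero] at hx; rw [← hx] at hε1; linarith
    have h2 : p - 2*ε ≠ 0 := ne_of_gt hpden
    field_simp
    ring
  have hz1 : (p-2)/(p-2*ε) ≤ 1 := by
    rw [div_le_one hpden]; linarith
  have hz0 : (0:ℝ) ≤ (p-2)/(p-2*ε) := div_nonneg (by linarith) hpden.le
  have hc : (p-2)/(p-2*ε) ≤ Real.cos φ := by
    rw [harg] at hφ
    have h1 : Real.cos (Real.arccos ((p-2)/(p-2*ε))) ≤ Real.cos |φ| :=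
      Real.cos_le_cos_of_nonneg_of_le_pi (abs_nonneg φ) (Real.arccos_le_pi _) hφ
    rw [Real.cos_arccos (by linarith) hz1, Real.cos_abs] at h1
    exact h1
  have hB : NTscal.Basics p (qexp p) δ ε (Real.cos φ) (Real.sin φ) :=
    ⟨hp, hq, hε0, hε1, hδ', hc, Real.cos_le_one φ, by rw [Real.sin_sq]⟩
  -- abbreviations
  have hNZ : Complex.normSq ζ = ζ.re^2 + ζ.im^2 := by rw [Complex.normSq_apply]; ring
  have hNH : Complex.normSq η = η.re^2 + η.im^2 := by rw [Complex.normSq_apply]; ring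
  have hNHpos : 0 < Complex.normSq η := Complex.normSq_pos.mpr hη
  have hNHne : Complex.normSq η ≠ 0 := ne_of_gt hNHpos
  have habsζnn : 0 ≤ ‖ζ‖ := norm_nonneg ζ
  have habsηpos : 0 < ‖η‖ := norm_pos_iff.mpr hη
  have hr : (‖ζ‖)^2 = Complex.normSq ζ := Complex.sq_norm ζ
  have hs : (‖η‖)^2 = Complex.normSq η := Complex.sq_norm η
  have hN1 : (Real.sqrt ((ω₁ 0)^2+(ω₁ 1)^2))^2 = (ω₁ 0)^2+(ω₁ 1)^2 :=
    Real.sq_sqrt (by positivity)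
  have hN2 : (Real.sqrt ((ω₂ 0)^2+(ω₂ 1)^2))^2 = (ω₂ 0)^2+(ω₂ 1)^2 :=
    Real.sq_sqrt (by positivity)
  have hN1nn := Real.sqrt_nonneg ((ω₁ 0)^2+(ω₁ 1)^2)
  have hN2nn := Real.sqrt_nonneg ((ω₂ 0)^2+(ω₂ 1)^2)
  have hdot1 : ω₁ ⬝ᵥ ω₁ = (ω₁ 0)^2 + (ω₁ 1)^2 := by
    simp [dotProduct, Fin.sum_univ_two]; ring
  have hdot2 : ω₂ ⬝ᵥ ω₂ = (ω₂ 0)^2 + (ω₂ 1)^2 := by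
    simp [dotProduct, Fin.sum_univ_two]; ring
  -- rpow bookkeeping
  have hSS : Complex.normSq η ^ ((2-qexp p)/2) * Complex.normSq η ^ (qexp p/2-1) = 1 := by
    rw [← Real.rpow_add hNHpos, show (2-qexp p)/2+(qexp p/2-1) = 0 from by ring, Real.rpow_zero]
  have hS2pos : 0 < Complex.normSq η ^ ((2-qexp p)/2) := Real.rpow_pos_of_pos hNHpos _
  have hSQ2pos : 0 < Complex.normSq η ^ (qexp p/2-1) := Real.rpow_pos_of_pos hNHpos _
  have hSQ4 : Complex.normSq η ^ (qexp p/2-2) * Complex.normSq η = Complex.normSq η ^ (qexp p/2-1) := by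
    have h0 := Real.rpow_add_one hNHne (qexp p/2-2)
    rw [show qexp p/2-2+1 = qexp p/2-1 from by ring] at h0
    exact h0.symm
  have hSMQ : Complex.normSq η ^ ((2-qexp p)/2-1) * Complex.normSq η
      = Complex.normSq η ^ ((2-qexp p)/2) := by
    have h0 := Real.rpow_add_one hNHne ((2-qexp p)/2-1)
    rw [show (2-qexp p)/2-1+1 = (2-qexp p)/2 from by ring] at h0
    exact h0.symm
  have hSMQ2 : Complex.normSq η ^ ((2-qexp p)/2-2) * Complex.normSq η
      = Complex.normSq η ^ ((2-qexp p)/2-1) := by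
    have h0 := Real.rpow_add_one hNHne ((2-qexp p)/2-2)
    rw [show (2-qexp p)/2-2+1 = (2-qexp p)/2-1 from by ring] at h0
    exact h0.symm
  have hR4 : Complex.normSq ζ ^ (p/2-2) * Complex.normSq ζ = Complex.normSq ζ ^ (p/2-1) := by
    rcases eq_or_ne (Complex.normSq ζ) 0 with hz | hz
    · rw [hz, mul_zero, Real.zero_rpow (ne_of_gt (show (0:ℝ) < p/2-1 by linarith))]
    · have h0 := Real.rpow_add_one hz (p/2-2)
      rw [show p/2-2+1 = p/2-1 from by ring] at h0
      exact h0.symm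
  have hR2nn : 0 ≤ Complex.normSq ζ ^ (p/2-1) := Real.rpow_nonneg (Complex.normSq_nonneg ζ) _
  -- conversions to abs powers
  have hns2abs : ∀ (z : ℂ) (e : ℝ), Complex.normSq z ^ e = ‖z‖ ^ (2*e) := by
    intro z e
    rw [← Complex.sq_norm, ← Real.rpow_natCast (‖z‖) 2,
      ← Real.rpow_mul (norm_nonneg z)]
    norm_num
  have hqp1 : qexp p * (1/p) = qexp p - 1 := by
    rw [hq]; field_simp; ring
  rcases hne.lt_or_gt with hlt | hgt
  · -- Region A
    have hA : (ζ, η) ∈ NTproof.A p := ⟨hlt, hη⟩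
    have hrle : ‖ζ‖ ≤ ‖η‖ ^ (qexp p - 1) := by
      have h1 : (‖ζ‖ ^ p) ^ (1/p) ≤ (‖η‖ ^ qexp p) ^ (1/p) :=
        Real.rpow_le_rpow (Real.rpow_nonneg habsζnn p) (le_of_lt hlt) (by positivity)
      rw [← Real.rpow_mul habsζnn, ← Real.rpow_mul habsηpos.le,
        show p*(1/p) = 1 from by field_simp, Real.rpow_one, hqp1] at h1
      exact h1
    have ht : Complex.normSq η ^ ((2-qexp p)/2-1) * ‖ζ‖ * ‖η‖ ≤ 1 := by
      rw [hns2abs η ((2-qexp p)/2-1), show 2*((2-qexp p)/2-1) = -(qexp p) from by ring]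
      calc ‖η‖^(-(qexp p)) * ‖ζ‖ * ‖η‖
          ≤ ‖η‖^(-(qexp p)) * ‖η‖^(qexp p-1) * ‖η‖ :=
            mul_le_mul_of_nonneg_right
              (mul_le_mul_of_nonneg_left hrle (Real.rpow_nonneg habsηpos.le _))
              habsηpos.le
        _ = 1 := by
            rw [← Real.rpow_add habsηpos,
              show -(qexp p) + (qexp p-1) = -1 from by ring, Real.rpow_neg_one]
            exact inv_mul_cancel₀ (ne_of_gt habsηpos)
    have key := NTscal.regionA hB ζ.re ζ.im η.re η.im (ω₁ 0) (ω₁ 1) (ω₂ 0) (ω₂ 1)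
      (Complex.normSq ζ ^ (p/2-1)) (Complex.normSq ζ ^ (p/2-2))
      (Complex.normSq η ^ ((2-qexp p)/2)) (Complex.normSq η ^ (qexp p/2-1))
      (Complex.normSq η ^ (qexp p/2-2)) (Complex.normSq η ^ ((2-qexp p)/2-1))
      (Complex.normSq η ^ ((2-qexp p)/2-2)) (‖ζ‖) (‖η‖)
      (Real.sqrt ((ω₁ 0)^2+(ω₁ 1)^2)) (Real.sqrt ((ω₂ 0)^2+(ω₂ 1)^2))
      (Complex.normSq ζ) (Complex.normSq η)
      hNZ hNH hr habsζnn hs habsηpos hR2nn hR4 hS2pos hSQ2pos hSS hSQ4 hSMQ hSMQ2 ht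
      hN1 hN2 hN1nn hN2nn
    rw [hdot1, hdot2]
    simp only [RQ, HQ, Umat, Omat, Matrix.smul_apply, smul_eq_mul, Matrix.add_apply,
      Matrix.mul_apply, Matrix.transpose_apply, Matrix.mulVec, dotProduct,
      Fintype.sum_sum_type, Fin.sum_univ_two,
      Matrix.fromBlocks_apply₁₁, Matrix.fromBlocks_apply₁₂,
      Matrix.fromBlocks_apply₂₁, Matrix.fromBlocks_apply₂₂,
      Sum.elim_inl, Sum.elim_inr, Matrix.of_apply, Matrix.cons_val', Matrix.cons_val_zero,
      Matrix.cons_val_one, Matrix.head_cons, Matrix.head_fin_const, Matrix.empty_val',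
      Matrix.cons_val_fin_one, Real.cos_neg, Real.sin_neg, Matrix.zero_apply]
    simp only [NTproof.H1_A δ hp hA, NTproof.H2_A δ hp hA, NTproof.H3_A δ hp hA]
    simp only [NTproof.cd, Matrix.cons_val_zero, Matrix.cons_val_one, Matrix.head_cons,
      show ((0:Fin 2) = 1) = False from eq_false (by decide),
      show ((1:Fin 2) = 0) = False from eq_false (by decide),
      show ((0:Fin 2) = 0) = True from eq_true rfl,
      show ((1:Fin 2) = 1) = True from eq_true rfl,
      if_true, if_false, mul_one, mul_zero, add_zero, zero_add]
    exact key.trans (le_of_eq (by ring))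
  · -- Region B
    have hBmem : (ζ, η) ∈ NTproof.B p := ⟨hgt, hη⟩
    have hNZne : Complex.normSq ζ ≠ 0 := NTproof.B_fst_ne hp hBmem
    have hNZpos : 0 < Complex.normSq ζ :=
      lt_of_le_of_ne (Complex.normSq_nonneg ζ) (Ne.symm hNZne)
    have hR2pos : 0 < Complex.normSq ζ ^ (p/2-1) := Real.rpow_pos_of_pos hNZpos _
    have hsr : ‖η‖ ^ (qexp p - 1) ≤ ‖ζ‖ := by
      have h1 : (‖η‖ ^ qexp p) ^ (1/p) ≤ (‖ζ‖ ^ p) ^ (1/p) :=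
        Real.rpow_le_rpow (Real.rpow_nonneg habsηpos.le _) (le_of_lt hgt) (by positivity)
      rw [← Real.rpow_mul habsζnn, ← Real.rpow_mul habsηpos.le,
        show p*(1/p) = 1 from by field_simp, Real.rpow_one, hqp1] at h1
      exact h1
    have hprod : 1 ≤ Complex.normSq ζ ^ (p/2-1) * Complex.normSq η ^ (qexp p/2-1) := by
      rw [hns2abs ζ (p/2-1), hns2abs η (qexp p/2-1),
        show 2*(p/2-1) = p-2 from by ring, show 2*(qexp p/2-1) = qexp p-2 from by ring]
      have h3 : ‖η‖ ^ ((qexp p-1)*(p-2)) ≤ ‖ζ‖ ^ (p-2) := by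
        rw [Real.rpow_mul habsηpos.le]
        exact Real.rpow_le_rpow (Real.rpow_nonneg habsηpos.le _) hsr (by linarith)
      rw [show (qexp p-1)*(p-2) = 2-qexp p from by rw [hq]; field_simp; ring] at h3
      have h4 : ‖η‖ ^ (2-qexp p) * ‖η‖ ^ (qexp p-2)
          ≤ ‖ζ‖ ^ (p-2) * ‖η‖ ^ (qexp p-2) :=
        mul_le_mul_of_nonneg_right h3 (Real.rpow_nonneg habsηpos.le _)
      rw [← Real.rpow_add habsηpos, show 2-qexp p+(qexp p-2) = 0 from by ring,
        Real.rpow_zero] at h4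
      exact h4
    have key := NTscal.regionB hB ζ.re ζ.im η.re η.im (ω₁ 0) (ω₁ 1) (ω₂ 0) (ω₂ 1)
      (Complex.normSq ζ ^ (p/2-1)) (Complex.normSq ζ ^ (p/2-2))
      (Complex.normSq η ^ (qexp p/2-1)) (Complex.normSq η ^ (qexp p/2-2))
      (Real.sqrt ((ω₁ 0)^2+(ω₁ 1)^2)) (Real.sqrt ((ω₂ 0)^2+(ω₂ 1)^2))
      (Complex.normSq ζ) (Complex.normSq η)
      hNZ hNH hR2pos hSQ2pos hR4 hSQ4 hprod hNZpos hNHpos hN1 hN2 hN1nn hN2nn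
    rw [hdot1, hdot2]
    simp only [RQ, HQ, Umat, Omat, Matrix.smul_apply, smul_eq_mul, Matrix.add_apply,
      Matrix.mul_apply, Matrix.transpose_apply, Matrix.mulVec, dotProduct,
      Fintype.sum_sum_type, Fin.sum_univ_two,
      Matrix.fromBlocks_apply₁₁, Matrix.fromBlocks_apply₁₂,
      Matrix.fromBlocks_apply₂₁, Matrix.fromBlocks_apply₂₂,
      Sum.elim_inl, Sum.elim_inr, Matrix.of_apply, Matrix.cons_val', Matrix.cons_val_zero,
      Matrix.cons_val_one, Matrix.head_cons, Matrix.head_fin_const, Matrix.empty_val',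
      Matrix.cons_val_fin_one, Real.cos_neg, Real.sin_neg, Matrix.zero_apply]
    simp only [NTproof.H1_B δ hp hBmem, NTproof.H2_B δ hp hBmem, NTproof.H3_B δ hp hBmem]
    simp only [NTproof.cd, Matrix.cons_val_zero, Matrix.cons_val_one, Matrix.head_cons,
      show ((0:Fin 2) = 1) = False from eq_false (by decide),
      show ((1:Fin 2) = 0) = False from eq_false (by decide),
      show ((0:Fin 2) = 0) = True from eq_true rfl,
      show ((1:Fin 2) = 1) = True from eq_true rfl,
      if_true, if_false, mul_one, mul_zero, add_zero, zero_add]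
    exact key.trans (le_of_eq (by ring))
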